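/- Let E be a directed graph and u a vertex of E supporting at least two distinct return paths, and let E_{u,−} be the Cuntz splice of E at u (adding vertices u_1, u_2 and edges e_1: u→u_1, e_2: u_1→u, f_1: u_1→u_1, f_2: u_1→u_2, h_1: u_2→u_1, h_2: u_2→u_2). Then every vertex-simple cycle in E_{u,−} that has no exit lies entirely in E; i.e. no edge of such a cycle belongs to the added edge set {e_1,e_2,f_1,f_2,h_1,h_2} and no vertex of the cycle equals u_1 or u_2. -/

import Mathlib

/-- A countable directed graph. -/
structure DGraph where
  V : Type
  E : Type
  countV : Countable V
  countE : Countable E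
  s : E → V
  r : E → V

/-- `α : Fin (n+1) → G.E` is a path: consecutive edges are composable. -/
def DGraph.IsPathSeq (G : DGraph) {n : ℕ} (α : Fin (n + 1) → G.E) : Prop :=
  ∀ i : Fin n, G.r (α i.castSucc) = G.s (α i.succ)

/-- A cycle: a nonempty path whose source equals its range. -/
def DGraph.IsCycle (G : DGraph) {n : ℕ} (α : Fin (n + 1) → G.E) : Prop :=
  G.IsPathSeq α ∧ G.s (α 0) = G.r (α (Fin.last n))

/-- A vertex-simple cycle: the ranges of the edges are pairwise distinct. -/
def DGraph.IsVertexSimple (G : DGraph) {n : ℕ} (α : Fin (n + 1) → G.E) : Prop :=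
  Function.Injective fun i : Fin (n + 1) => G.r (α i)

/-- The cycle `α` has an exit: some edge `g` has its source on the cycle but is not an
edge of the cycle (at that position). -/
def DGraph.HasExit (G : DGraph) {n : ℕ} (α : Fin (n + 1) → G.E) : Prop :=
  ∃ g : G.E, ∃ i : Fin (n + 1), G.s g = G.s (α i) ∧ g ≠ α i

/-- A return path based at `v`: a cycle starting and ending at `v` which visits `v`
only at its endpoints. -/
def DGraph.IsReturnPath (G : DGraph) (v : G.V) {n : ℕ} (α : Fin (n + 1) → G.E) : Prop :=
  G.IsPathSeq α ∧ G.s (α 0) = v ∧ G.r (α (Fin.last n)) = v ∧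
    ∀ i : Fin (n + 1), i ≠ Fin.last n → G.r (α i) ≠ v

/-- `v` supports at least two distinct return paths (distinct as edge sequences). -/
def DGraph.TwoReturnPaths (G : DGraph) (v : G.V) : Prop :=
  ∃ p q : (Σ n : ℕ, Fin (n + 1) → G.E),
    G.IsReturnPath v p.2 ∧ G.IsReturnPath v q.2 ∧ p ≠ q

/-- The Cuntz splice `E_{u,-}` of `G` at `u`: two new vertices `u₁ = inr 0`,
`u₂ = inr 1` and six new edges `e₁ : u → u₁`, `e₂ : u₁ → u`, `f₁ : u₁ → u₁`,
`f₂ : u₁ → u₂`, `h₁ : u₂ → u₁`, `h₂ : u₂ → u₂`. -/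
def DGraph.cuntzSplice (G : DGraph) (u : G.V) : DGraph where
  V := G.V ⊕ Fin 2
  E := G.E ⊕ Fin 6
  countV := by haveI := G.countV; exact inferInstance
  countE := by haveI := G.countE; exact inferInstance
  s := Sum.elim (fun e => Sum.inl (G.s e))
    ![Sum.inl u, Sum.inr 0, Sum.inr 0, Sum.inr 0, Sum.inr 1, Sum.inr 1]
  r := Sum.elim (fun e => Sum.inl (G.r e))
    ![Sum.inr 0, Sum.inl u, Sum.inr 0, Sum.inr 1, Sum.inr 0, Sum.inr 1]

/-- Every vertex-simple cycle without an exit in the Cuntz splice `E_{u,-}` lies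
entirely in `E`: none of its edges is one of the six added edges, and none of its
vertices is `u₁` or `u₂`. -/
theorem cuntz_splice_cycle_in_original (G : DGraph) (u : G.V)
    (h2 : G.TwoReturnPaths u) {n : ℕ} (α : Fin (n + 1) → (G.cuntzSplice u).E)
    (hcyc : (G.cuntzSplice u).IsCycle α)
    (hsimple : (G.cuntzSplice u).IsVertexSimple α)
    (hnoexit : ¬ (G.cuntzSplice u).HasExit α) :
    (∀ i : Fin (n + 1), ∃ e : G.E, α i = Sum.inl e) ∧
    (∀ i : Fin (n + 1), ∀ j : Fin 2,
      (G.cuntzSplice u).r (α i) ≠ Sum.inr j ∧ (G.cuntzSplice u).s (α i) ≠ Sum.inr j) := by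
  obtain ⟨p, q, hp, hq, hpq⟩ := h2
  obtain ⟨hpp, hps, _⟩ := hp
  have hedges : ∀ i : Fin (n + 1), ∃ e : G.E, α i = Sum.inl e := by
    intro i
    cases h : α i with
    | inl e => exact ⟨e, rfl⟩
    | inr k =>
      exfalso
      apply hnoexit
      fin_cases k
      · exact ⟨Sum.inl (p.2 0), i, by simp [h, DGraph.cuntzSplice, hps],
          by simp [h]; exact Sum.inl_ne_inr⟩
      · exact ⟨Sum.inr 2, i, by rw [h]; rfl, by rw [h]; intro hh; exact absurd (Sum.inr.inj hh) (by decide)⟩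
      · exact ⟨Sum.inr 1, i, by rw [h]; rfl, by rw [h]; intro hh; exact absurd (Sum.inr.inj hh) (by decide)⟩
      · exact ⟨Sum.inr 1, i, by rw [h]; rfl, by rw [h]; intro hh; exact absurd (Sum.inr.inj hh) (by decide)⟩
      · exact ⟨Sum.inr 5, i, by rw [h]; rfl, by rw [h]; intro hh; exact absurd (Sum.inr.inj hh) (by decide)⟩
      · exact ⟨Sum.inr 4, i, by rw [h]; rfl, by rw [h]; intro hh; exact absurd (Sum.inr.inj hh) (by decide)⟩
  refine ⟨hedges, fun i j => ?_⟩
  obtain ⟨e, he⟩ := hedges i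
  rw [he]
  exact ⟨by simp [DGraph.cuntzSplice], by simp [DGraph.cuntzSplice]⟩
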